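/- Equip ℂ[[s]] with the s-adic grading (deg s = 1). Let C• be a complex of finitely generated free graded ℂ[[s]]-modules generated in degree zero, whose differentials are graded homomorphisms of degree +1 (i.e., each differential is s times a matrix with constant entries). Then the torsion submodule of each cohomology module of C• is annihilated by s. -/

import Mathlib

set_option synthInstance.maxHeartbeats 1000000
set_option maxHeartbeats 1000000

open PowerSeries

/-- If every coefficient vector of `z` lies in the range of the constant matrix `A`
(over `ℂ`), then `z` lies in the range of `A` over `ℂ[[s]]`. -/
lemma mem_range_of_coeffs {m p : ℕ} (A : Matrix (Fin m) (Fin p) ℂ)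
    (z : Fin m → PowerSeries ℂ)
    (h : ∀ k : ℕ, (fun j => PowerSeries.coeff k (z j)) ∈
        LinearMap.range (Matrix.toLin' A)) :
    z ∈ LinearMap.range (Matrix.toLin' (A.map (PowerSeries.C))) := by
  -- pick a linear section of `toLin' A` on its range
  set f : (Fin p → ℂ) →ₗ[ℂ] (Fin m → ℂ) := Matrix.toLin' A with hf
  obtain ⟨σ, hσ⟩ := f.rangeRestrict.exists_rightInverse_of_surjective
    (LinearMap.range_eq_top.mpr f.surjective_rangeRestrict)
  have hsec : ∀ y : LinearMap.range f, f (σ y) = (y : Fin m → ℂ) := by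
    intro y
    have := congrArg (fun g => (g y : Fin m → ℂ)) hσ
    simpa [LinearMap.rangeRestrict] using this
  refine ⟨fun l => PowerSeries.mk (fun k => σ ⟨_, h k⟩ l), ?_⟩
  funext j
  ext k
  have hexp : (Matrix.toLin' (A.map (PowerSeries.C))
      (fun l => PowerSeries.mk (fun k => σ ⟨_, h k⟩ l))) j
      = ∑ l, PowerSeries.C (A j l) * PowerSeries.mk (fun k => σ ⟨_, h k⟩ l) := by
    simp [Matrix.toLin'_apply, Matrix.mulVec, dotProduct]
  rw [hexp, map_sum]
  have hc : ∀ l, PowerSeries.coeff k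
      (PowerSeries.C (A j l) * PowerSeries.mk (fun k => σ ⟨_, h k⟩ l))
      = A j l * σ ⟨_, h k⟩ l := by
    intro l; rw [PowerSeries.coeff_C_mul, PowerSeries.coeff_mk]
  rw [Finset.sum_congr rfl (fun l _ => hc l)]
  have hy := congrFun (hsec ⟨_, h k⟩) j
  simpa [hf, Matrix.toLin'_apply, Matrix.mulVec, dotProduct] using hy

/-- Let `C•` be a complex of finitely generated free graded `ℂ[[s]]`-modules generated in
degree zero (so `C i = ℂ[[s]]^{n i}` with basis in degree `0` and `deg s = 1`), whose
differentials are graded of degree `+1`, i.e. each differential equals `s` times a matrix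
with constant (scalar) entries. Then the torsion of each cohomology module is annihilated
by `s`: in degree `i+1`, any cocycle `z` which is torsion modulo coboundaries satisfies
`s • z ∈ im`. -/
theorem graded_degree_one_complex_semisimple_cohomology
    (n : ℤ → ℕ)
    (d : ∀ i : ℤ, (Fin (n i) → PowerSeries ℂ) →ₗ[PowerSeries ℂ] (Fin (n (i + 1)) → PowerSeries ℂ))
    (hgraded : ∀ i : ℤ, ∃ A : Matrix (Fin (n (i + 1))) (Fin (n i)) ℂ,
      d i = (PowerSeries.X : PowerSeries ℂ) • Matrix.toLin' (A.map (PowerSeries.C : ℂ →+* PowerSeries ℂ)))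
    (hd : ∀ i : ℤ, (d (i + 1)).comp (d i) = 0) :
    ∀ i : ℤ, ∀ z ∈ LinearMap.ker (d (i + 1)),
      (∃ c : PowerSeries ℂ, c ≠ 0 ∧ c • z ∈ LinearMap.range (d i)) →
        (PowerSeries.X : PowerSeries ℂ) • z ∈ LinearMap.range (d i) := by
  intro i z hz ⟨c, hc, w, hw⟩
  obtain ⟨A, hA⟩ := hgraded i
  set L : (Fin (n i) → PowerSeries ℂ) →ₗ[PowerSeries ℂ] (Fin (n (i+1)) → PowerSeries ℂ) :=
    Matrix.toLin' (A.map (PowerSeries.C)) with hL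
  -- factor c = X^k * u with u a unit
  set k : ℕ := c.order.lift (PowerSeries.order_finite_iff_ne_zero.mpr hc) with hk
  set u : PowerSeries ℂ := PowerSeries.divXPowOrder c with hu
  have hcu : c = (PowerSeries.X : PowerSeries ℂ) ^ k * u := by
    rw [hk, ENat.lift_eq_toNat_of_lt_top, hu]
    exact (PowerSeries.X_pow_order_mul_divXPowOrder).symm
  have huu : IsUnit u := PowerSeries.isUnit_divided_by_X_pow_order hc
  obtain ⟨U, hU⟩ := huu
  have h1 : (PowerSeries.X : PowerSeries ℂ) • L w = c • z := by
    rw [← hw, hA]; rfl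
  -- main equation: X • L w' = X^k • z  where w' = U⁻¹ • w
  have hw' : (PowerSeries.X : PowerSeries ℂ) • L ((↑U⁻¹ : PowerSeries ℂ) • w)
      = ((PowerSeries.X : PowerSeries ℂ) ^ k) • z := by
    calc (PowerSeries.X : PowerSeries ℂ) • L ((↑U⁻¹ : PowerSeries ℂ) • w)
        = (↑U⁻¹ : PowerSeries ℂ) • ((PowerSeries.X : PowerSeries ℂ) • L w) := by
          rw [map_smul, smul_comm]
      _ = (↑U⁻¹ : PowerSeries ℂ) • (c • z) := by rw [h1]
      _ = ((PowerSeries.X : PowerSeries ℂ) ^ k) • z := by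
          rw [smul_smul, hcu, ← hU,
            mul_comm ((PowerSeries.X : PowerSeries ℂ) ^ k) (↑U : PowerSeries ℂ),
            ← mul_assoc, Units.inv_mul, one_mul]
  set w' : Fin (n i) → PowerSeries ℂ := (↑U⁻¹ : PowerSeries ℂ) • w with hw'def
  -- each coefficient vector of z is in the range of A over ℂ
  have hcoeff : ∀ j : ℕ, (fun l => PowerSeries.coeff j (z l)) ∈
      LinearMap.range (Matrix.toLin' A) := by
    intro j
    have heq : ∀ l, PowerSeries.coeff j (z l)
        = PowerSeries.coeff (j + k) ((PowerSeries.X : PowerSeries ℂ) * (L w') l) := by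
      intro l
      have hcl := congrFun hw' l
      have h3 : ((PowerSeries.X : PowerSeries ℂ) • L w') l
          = (PowerSeries.X : PowerSeries ℂ) * (L w') l := rfl
      have h4 : (((PowerSeries.X : PowerSeries ℂ) ^ k) • z) l
          = (PowerSeries.X : PowerSeries ℂ) ^ k * z l := rfl
      rw [h3, h4] at hcl
      rw [← PowerSeries.coeff_X_pow_mul (z l) k j, ← hcl]
    rcases Nat.eq_zero_or_pos (j + k) with h0 | hpos
    · refine ⟨0, ?_⟩
      funext l
      rw [map_zero]
      have hz0 : PowerSeries.coeff j (z l) = 0 := by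
        rw [heq l, h0, PowerSeries.coeff_zero_X_mul]
      rw [hz0]; rfl
    · refine ⟨fun l' => PowerSeries.coeff (j + k - 1) (w' l'), ?_⟩
      funext l
      rw [heq l]
      have hsucc : j + k = (j + k - 1) + 1 := (Nat.succ_pred_eq_of_pos hpos).symm
      rw [hsucc, PowerSeries.coeff_succ_X_mul]
      have hLl : (L w') l = ∑ l', PowerSeries.C (A l l') * w' l' := by
        simp [hL, Matrix.toLin'_apply, Matrix.mulVec, dotProduct]
      rw [hLl, map_sum]
      simp [Matrix.toLin'_apply, Matrix.mulVec, dotProduct, PowerSeries.coeff_C_mul]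
  -- hence z itself is in the range of L
  obtain ⟨w'', hw''⟩ := mem_range_of_coeffs A z hcoeff
  exact ⟨w'', by rw [hA]; exact congrArg (fun v => (PowerSeries.X : PowerSeries ℂ) • v) hw''⟩
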